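/- Let G = (V, E, w) be a connected weighted graph with deg(v) ≥ 1/α for all v ∈ V, and let R_diam = max_{u,v} Reff(u,v). Then for any 0 < ε < 1/2 there exists a set U ⊆ V with vol(U) ≤ vol(G)/2 and Φ(U) ≤ C · α^ε / √(R_diam · ε) · vol(U)^{ε - 1/2} for some universal constant C. -/

import Mathlib

open Matrix BigOperators Finset

variable {V : Type*} [Fintype V] [DecidableEq V]

/-- weighted degree -/
noncomputable def deg (w : V → V → ℝ) (v : V) : ℝ := ∑ u, w v u

/-- volume of a vertex set -/
noncomputable def vol (w : V → V → ℝ) (S : Finset V) : ℝ := ∑ v ∈ S, deg w v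

/-- total weight of edges crossing the cut (S, Sᶜ) -/
noncomputable def cutW (w : V → V → ℝ) (S : Finset V) : ℝ := ∑ u ∈ S, ∑ v ∈ Sᶜ, w u v

/-- total edge weight w(E) -/
noncomputable def totalW (w : V → V → ℝ) : ℝ := (∑ u, ∑ v, w u v) / 2

/-- weighted Laplacian L = D - W -/
noncomputable def lap (w : V → V → ℝ) : Matrix V V ℝ :=
  Matrix.of fun u v => if u = v then deg w u else - w u v

/-- the four Moore–Penrose conditions -/
def IsMoorePenrose (L Ld : Matrix V V ℝ) : Prop :=
  L * Ld * L = L ∧ Ld * L * Ld = Ld ∧ (L * Ld)ᵀ = L * Ld ∧ (Ld * L)ᵀ = Ld * L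

/-- effective resistance via the pseudoinverse Ld of the Laplacian -/
noncomputable def reff (Ld : Matrix V V ℝ) (u v : V) : ℝ :=
  (Pi.single u 1 - Pi.single v 1) ⬝ᵥ (Ld *ᵥ (Pi.single u 1 - Pi.single v 1))

/-- valid symmetric nonnegative loopless weights -/
def GoodW (w : V → V → ℝ) : Prop :=
  (∀ u v, 0 ≤ w u v) ∧ (∀ u v, w u v = w v u) ∧ (∀ v, w v v = 0)

/-- connectivity of the weighted graph -/
def Conn (w : V → V → ℝ) : Prop := (SimpleGraph.fromRel fun u v => 0 < w u v).Connected

namespace SCAux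

/-- flo: the predecessor value in a finite set of reals -/
noncomputable def flo (F : Finset ℝ) (t : ℝ) : ℝ :=
  if h : (F.filter (fun s => s < t)).Nonempty then (F.filter (fun s => s < t)).max' h else 0

lemma flo_spec {F : Finset ℝ} {a t : ℝ} (ha : a ∈ F) (hat : a < t) :
    flo F t ∈ F ∧ flo F t < t ∧ ∀ s ∈ F, s < t → s ≤ flo F t := by
  have hne : (F.filter (fun s => s < t)).Nonempty := ⟨a, by simp [ha, hat]⟩
  rw [flo, dif_pos hne]
  refine ⟨?_, ?_, ?_⟩
  · have := (F.filter (fun s => s < t)).max'_mem hne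
    simp only [mem_filter] at this; exact this.1
  · have := (F.filter (fun s => s < t)).max'_mem hne
    simp only [mem_filter] at this; exact this.2
  · intro s hs hst
    exact Finset.le_max' _ s (by simp [hs, hst])


/-- upper bound: a sum of disjoint gap lengths inside [p,q] is at most q - p -/
lemma gaps_le : ∀ (n : ℕ) (G : Finset ℝ) (lo : ℝ → ℝ) (p q : ℝ), G.card ≤ n →
    (∀ t ∈ G, lo t < t ∧ p ≤ lo t ∧ t ≤ q) →
    (∀ s ∈ G, ∀ t ∈ G, s < t → s ≤ lo t) → p ≤ q →
    ∑ t ∈ G, (t - lo t) ≤ q - p := by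
  intro n
  induction n with
  | zero =>
    intro G lo p q hcard _ _ hpq
    have : G = ∅ := Finset.card_eq_zero.mp (Nat.le_zero.mp hcard)
    simp [this]; linarith
  | succ m ih =>
    intro G lo p q hcard hmem hsep hpq
    rcases G.eq_empty_or_nonempty with rfl | hne
    · simp; linarith
    · set b := G.max' hne with hb
      have hbG : b ∈ G := G.max'_mem hne
      set G' := G.erase b with hG'
      have hcard' : G'.card ≤ m := by
        have h1 : G'.card = G.card - 1 := by rw [hG']; exact Finset.card_erase_of_mem hbG
        have h2 := Finset.card_pos.mpr hne
        omega
      have hsum : ∑ t ∈ G, (t - lo t) = (b - lo b) + ∑ t ∈ G', (t - lo t) := by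
        rw [hG', ← Finset.add_sum_erase _ _ hbG]
      have hstep : ∑ t ∈ G', (t - lo t) ≤ lo b - p := by
        apply ih G' lo p (lo b) hcard'
        · intro t ht
          have htG : t ∈ G := Finset.mem_of_mem_erase ht
          refine ⟨(hmem t htG).1, (hmem t htG).2.1, ?_⟩
          have htb : t < b := lt_of_le_of_ne (G.le_max' t htG) (Finset.ne_of_mem_erase ht)
          exact hsep t htG b hbG htb
        · intro s hs t ht hst
          exact hsep s (Finset.mem_of_mem_erase hs) t (Finset.mem_of_mem_erase ht) hst
        · exact (hmem b hbG).2.1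
      have := (hmem b hbG).2.2
      linarith


/-- lower bound: telescoping over the gaps of F above a reaches from a to b -/
lemma telescope : ∀ (n : ℕ) (F : Finset ℝ) (a b : ℝ), F.card ≤ n →
    a ∈ F → b ∈ F → (∀ t ∈ F, t ≤ b) → a ≤ b →
    b - a ≤ ∑ t ∈ F.filter (fun t => a < t), (t - flo F t) := by
  intro n
  induction n with
  | zero =>
    intro F a b hcard ha _ _ _
    exact absurd (Finset.card_pos.mpr ⟨a, ha⟩) (by omega)
  | succ m ih =>
    intro F a b hcard ha hb hFb hab
    rcases eq_or_lt_of_le hab with rfl | hab'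
    · have : ∀ t ∈ F.filter (fun t => a < t), 0 ≤ t - flo F t := by
        intro t ht
        rw [Finset.mem_filter] at ht
        have := flo_spec ha ht.2
        linarith [this.2.1]
      linarith [Finset.sum_nonneg this]
    · -- a < b
      obtain ⟨hb'F, hb'b, hb'max⟩ := flo_spec ha hab'
      set b' := flo F b with hb'
      set F' := F.erase b with hF'
      have hb'F' : b' ∈ F' := Finset.mem_erase.mpr ⟨ne_of_lt hb'b, hb'F⟩
      have haF' : a ∈ F' := Finset.mem_erase.mpr ⟨ne_of_lt hab', ha⟩
      have hflo_eq : ∀ t ∈ F'.filter (fun t => a < t), flo F' t = flo F t := by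
        intro t ht
        rw [Finset.mem_filter, hF', Finset.mem_erase] at ht
        have htb : t < b := lt_of_le_of_ne (hFb t ht.1.2) ht.1.1
        have heq : F'.filter (fun s => s < t) = F.filter (fun s => s < t) := by
          apply Finset.ext; intro s
          simp only [Finset.mem_filter, hF', Finset.mem_erase]
          constructor
          · rintro ⟨⟨_, hsF⟩, hst⟩; exact ⟨hsF, hst⟩
          · rintro ⟨hsF, hst⟩
            exact ⟨⟨by rintro rfl; linarith, hsF⟩, hst⟩
        rw [flo, flo, heq]
      have hFb' : ∀ t ∈ F', t ≤ b' := by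
        intro t ht
        rw [hF', Finset.mem_erase] at ht
        exact hb'max t ht.2 (lt_of_le_of_ne (hFb t ht.2) ht.1)
      have hab'' : a ≤ b' := hb'max a ha hab'
      have hcard' : F'.card ≤ m := by
        have h1 : F'.card = F.card - 1 := by rw [hF']; exact Finset.card_erase_of_mem hb
        have h2 := Finset.card_pos.mpr (⟨a, ha⟩ : F.Nonempty)
        omega
      have IH := ih F' a b' hcard' haF' hb'F' hFb' hab''
      have hsplit : F.filter (fun t => a < t) = insert b (F'.filter (fun t => a < t)) := by
        apply Finset.ext; intro t
        simp only [Finset.mem_filter, Finset.mem_insert, hF', Finset.mem_erase]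
        constructor
        · rintro ⟨htF, hat⟩
          by_cases h : t = b
          · left; exact h
          · right; exact ⟨⟨h, htF⟩, hat⟩
        · rintro (rfl | ⟨⟨_, htF⟩, hat⟩)
          · exact ⟨hb, hab'⟩
          · exact ⟨htF, hat⟩
      have hbnot : b ∉ F'.filter (fun t => a < t) := by
        simp [hF']
      rw [hsplit, Finset.sum_insert hbnot]
      have hcongr : ∑ t ∈ F'.filter (fun t => a < t), (t - flo F t)
           = ∑ t ∈ F'.filter (fun t => a < t), (t - flo F' t) :=
        Finset.sum_congr rfl (fun t ht => by rw [hflo_eq t ht])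
      rw [hcongr]
      linarith

lemma lap_mulVec (w : V → V → ℝ) (hww : ∀ v, w v v = 0) (x : V → ℝ) (a : V) :
    (lap w *ᵥ x) a = ∑ b, w a b * (x a - x b) := by
  simp only [lap, mulVec, dotProduct, Matrix.of_apply]
  have h1 : ∀ b : V, (if a = b then deg w a else -w a b) * x b
      = (if b = a then deg w a * x a + w a a * x a else 0) + (-(w a b * x b)) := by
    intro b
    by_cases hab : a = b
    · subst hab; simp [hww a]
    · simp [hab, Ne.symm hab]
  rw [Finset.sum_congr rfl fun b _ => h1 b]
  rw [Finset.sum_add_distrib, Finset.sum_ite_eq' Finset.univ a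
    (fun _ => deg w a * x a + w a a * x a)]
  simp only [mem_univ, if_true, hww a, zero_mul, add_zero]
  simp only [mul_sub, Finset.sum_sub_distrib, ← Finset.sum_mul, deg]
  rw [Finset.sum_neg_distrib]; ring


lemma lap_transpose (w : V → V → ℝ) (hsym : ∀ u v, w u v = w v u) : (lap w)ᵀ = lap w := by
  ext a b
  simp only [transpose_apply, lap, Matrix.of_apply]
  by_cases hab : a = b
  · subst hab; simp
  · simp [hab, Ne.symm hab, hsym a b]

lemma energy_eq (w : V → V → ℝ) (hsym : ∀ u v, w u v = w v u) (hww : ∀ v, w v v = 0) (x : V → ℝ) :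
    x ⬝ᵥ (lap w *ᵥ x) = (1/2) * ∑ a, ∑ b, w a b * (x a - x b)^2 := by
  have hY : x ⬝ᵥ (lap w *ᵥ x) = ∑ a, ∑ b, w a b * (x a * (x a - x b)) := by
    simp only [dotProduct, lap_mulVec w hww]
    rw [Finset.sum_congr rfl fun a _ => by rw [Finset.mul_sum]]
    congr 1; ext a; congr 1; ext b; ring
  have hswap : ∑ a, ∑ b, w a b * (x b * (x a - x b))
      = - ∑ a, ∑ b, w a b * (x a * (x a - x b)) := by
    rw [Finset.sum_comm]
    rw [← Finset.sum_neg_distrib]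
    congr 1; ext b
    rw [← Finset.sum_neg_distrib]
    congr 1; ext a
    rw [hsym a b]; ring
  have : ∑ a, ∑ b, w a b * (x a - x b)^2
      = ∑ a, ∑ b, w a b * (x a * (x a - x b)) - ∑ a, ∑ b, w a b * (x b * (x a - x b)) := by
    rw [← Finset.sum_sub_distrib]
    congr 1; ext a
    rw [← Finset.sum_sub_distrib]
    congr 1; ext b; ring
  rw [hY, this, hswap]; ring


lemma kernel_const (w : V → V → ℝ) (hw0 : ∀ u v, 0 ≤ w u v) (hsym : ∀ u v, w u v = w v u)
    (hww : ∀ v, w v v = 0) (hc : Conn w) (x : V → ℝ)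
    (hx : lap w *ᵥ x = 0) : ∀ a b, x a = x b := by
  have hE : ∑ a, ∑ b, w a b * (x a - x b)^2 = 0 := by
    have := energy_eq w hsym hww x
    rw [hx] at this
    simp only [dotProduct_zero] at this
    linarith
  have hterm : ∀ a b : V, 0 < w a b → x a = x b := by
    intro a b hpos
    have h1 : ∀ a ∈ (univ : Finset V), 0 ≤ ∑ b, w a b * (x a - x b)^2 := by
      intro a _
      exact Finset.sum_nonneg fun b _ => mul_nonneg (hw0 a b) (sq_nonneg _)
    have h2 := (Finset.sum_eq_zero_iff_of_nonneg h1).mp hE a (mem_univ a)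
    have h3 : ∀ b ∈ (univ : Finset V), 0 ≤ w a b * (x a - x b)^2 :=
      fun b _ => mul_nonneg (hw0 a b) (sq_nonneg _)
    have h4 := (Finset.sum_eq_zero_iff_of_nonneg h3).mp h2 b (mem_univ b)
    rcases mul_eq_zero.mp h4 with h | h
    · exact absurd h (ne_of_gt hpos)
    · have := pow_eq_zero_iff (n := 2) (by norm_num) |>.mp h
      linarith [sub_eq_zero.mp this]
  intro a b
  obtain ⟨p⟩ := (hc.preconnected a b)
  induction p with
  | nil => rfl
  | cons hadj _ ih =>
    rename_i c d _ _
    rw [← ih]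
    rw [SimpleGraph.fromRel_adj] at hadj
    rcases hadj.2 with h | h
    · exact hterm _ _ h
    · rw [hsym] at h; exact hterm _ _ h

lemma lap_harmonic (w : V → V → ℝ) (hw0 : ∀ u v, 0 ≤ w u v) (hsym : ∀ u v, w u v = w v u)
    (hww : ∀ v, w v v = 0) (hc : Conn w) {Ld : Matrix V V ℝ}
    (hmp : IsMoorePenrose (lap w) Ld) (p q : V) :
    lap w *ᵥ (Ld *ᵥ (Pi.single p 1 - Pi.single q 1)) = Pi.single p 1 - Pi.single q 1 := by
  obtain ⟨h1, h2, h3, h4⟩ := hmp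
  set L := lap w with hL
  set P := L * Ld with hP
  set d : V → ℝ := Pi.single p 1 - Pi.single q 1 with hd
  -- L * (1 - P) = 0
  have hPL : P * L = L := by rw [hP]; exact h1
  have hLP : L * (1 - P) = 0 := by
    have h5 : (1 - P) * L = 0 := by rw [sub_mul, hPL, one_mul, sub_self]
    have h6 := congrArg Matrix.transpose h5
    rw [Matrix.transpose_mul, Matrix.transpose_zero, lap_transpose w hsym] at h6
    rw [Matrix.transpose_sub, Matrix.transpose_one, h3] at h6
    exact h6
  -- r := (1-P) d is constant
  set r : V → ℝ := (1 - P) *ᵥ d with hr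
  have hrzero : L *ᵥ r = 0 := by
    rw [hr, mulVec_mulVec, hLP, zero_mulVec]
  have hrconst : ∀ a b, r a = r b := kernel_const w hw0 hsym hww hc r hrzero
  -- d ⬝ᵥ r = r p - r q = 0
  have hdr : d ⬝ᵥ r = 0 := by
    have : d ⬝ᵥ r = r p - r q := by
      rw [hd, sub_dotProduct, single_dotProduct, single_dotProduct, one_mul, one_mul]
    rw [this, hrconst p q, sub_self]
  -- (1-P) is symmetric idempotent
  have hPP : P * P = P := by
    rw [hP]
    calc L * Ld * (L * Ld) = (L * Ld * L) * Ld := by noncomm_ring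
    _ = L * Ld := by rw [h1]
  have hproj : (1 - P)ᵀ * (1 - P) = 1 - P := by
    rw [Matrix.transpose_sub, Matrix.transpose_one, h3]
    rw [Matrix.sub_mul, Matrix.mul_sub, Matrix.mul_sub, hPP]
    noncomm_ring
  have hrr : r ⬝ᵥ r = 0 := by
    have e1 : r ⬝ᵥ r = d ⬝ᵥ ((1 - P)ᵀ *ᵥ r) := by
      conv_lhs => rw [hr]
      rw [dotProduct_comm, dotProduct_mulVec, dotProduct_comm]
      congr 1
      rw [← Matrix.mulVec_transpose]
    have e2 : (1 - P)ᵀ *ᵥ r = r := by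
      rw [hr, mulVec_mulVec, hproj]
    rw [e1, e2, hdr]
  have hr0 : r = 0 := by
    have : ∀ a ∈ (univ : Finset V), r a * r a = 0 := by
      intro a _
      have hnn : ∀ b ∈ (univ : Finset V), 0 ≤ r b * r b := fun b _ => mul_self_nonneg _
      exact (Finset.sum_eq_zero_iff_of_nonneg hnn).mp hrr a (mem_univ a)
    funext a
    have := this a (mem_univ a)
    have := mul_self_eq_zero.mp this
    simpa using this
  have hPd : P *ᵥ d = d := by
    have : d - P *ᵥ d = 0 := by
      rw [← hr0, hr, sub_mulVec, one_mulVec]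
    exact (sub_eq_zero.mp this).symm
  rw [mulVec_mulVec]
  exact hPd

/-- value of reff from the harmonic potential -/
lemma reff_eq_sub {Ld : Matrix V V ℝ} (p q : V) :
    reff Ld p q = (Ld *ᵥ (Pi.single p 1 - Pi.single q 1)) p
      - (Ld *ᵥ (Pi.single p 1 - Pi.single q 1)) q := by
  rw [reff, sub_dotProduct, single_dotProduct, single_dotProduct, one_mul, one_mul]


/-- positivity of reff for distinct vertices, given harmonicity -/
lemma reff_pos (w : V → V → ℝ) (hw0 : ∀ u v, 0 ≤ w u v) (hsym : ∀ u v, w u v = w v u)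
    (hww : ∀ v, w v v = 0) (hc : Conn w) {Ld : Matrix V V ℝ} {p q : V} (hpq : p ≠ q)
    (hh : lap w *ᵥ (Ld *ᵥ (Pi.single p 1 - Pi.single q 1)) = Pi.single p 1 - Pi.single q 1) :
    0 < reff Ld p q := by
  set d : V → ℝ := Pi.single p 1 - Pi.single q 1 with hd
  set f : V → ℝ := Ld *ᵥ d with hf
  have hre : reff Ld p q = f ⬝ᵥ (lap w *ᵥ f) := by
    rw [hh, reff, dotProduct_comm]
  have hE := energy_eq w hsym hww f
  have hnn : (0:ℝ) ≤ ∑ a, ∑ b, w a b * (f a - f b)^2 :=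
    Finset.sum_nonneg fun a _ => Finset.sum_nonneg fun b _ =>
      mul_nonneg (hw0 a b) (sq_nonneg _)
  rcases lt_or_eq_of_le hnn with h | h
  · rw [hre, hE]; linarith
  · exfalso
    -- energy zero: f constant, so d = L f = 0, contradict d p = 1
    have hzero : lap w *ᵥ f = 0 := by
      funext a
      rw [lap_mulVec w hww]
      apply Finset.sum_eq_zero
      intro b _
      have h1 : ∀ a ∈ (univ : Finset V), 0 ≤ ∑ b, w a b * (f a - f b)^2 := by
        intro a _
        exact Finset.sum_nonneg fun b _ => mul_nonneg (hw0 a b) (sq_nonneg _)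
      have h2 := (Finset.sum_eq_zero_iff_of_nonneg h1).mp h.symm a (mem_univ a)
      have h3 : ∀ b ∈ (univ : Finset V), 0 ≤ w a b * (f a - f b)^2 :=
        fun b _ => mul_nonneg (hw0 a b) (sq_nonneg _)
      have h4 := (Finset.sum_eq_zero_iff_of_nonneg h3).mp h2 b (mem_univ b)
      rcases mul_eq_zero.mp h4 with h5 | h5
      · rw [h5, zero_mul]
      · have := pow_eq_zero_iff (n := 2) (by norm_num) |>.mp h5
        rw [this, mul_zero]
    rw [hzero] at hh
    have := congrFun hh.symm p
    simp [hd, Pi.single_eq_same, Pi.single_eq_of_ne hpq] at this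


/-- unit current across a separating set -/
lemma unit_current (w : V → V → ℝ) (hsym : ∀ u v, w u v = w v u) (hww : ∀ v, w v v = 0)
    {f : V → ℝ} {p q : V}
    (hh : lap w *ᵥ f = Pi.single p 1 - Pi.single q 1)
    {S : Finset V} (hp : p ∈ S) (hq : q ∉ S) :
    ∑ a ∈ S, ∑ b ∈ Sᶜ, w a b * (f a - f b) = 1 := by
  have hsplit : ∀ a : V, ∑ b, w a b * (f a - f b)
      = ∑ b ∈ S, w a b * (f a - f b) + ∑ b ∈ Sᶜ, w a b * (f a - f b) :=
    fun a => (Finset.sum_add_sum_compl S _).symm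
  have key : ∑ a ∈ S, ∑ b, w a b * (f a - f b) = ∑ a ∈ S, (Pi.single p 1 - Pi.single q 1 : V → ℝ) a := by
    apply Finset.sum_congr rfl
    intro a _
    rw [← lap_mulVec w hww, hh]
  have hdiag : ∑ a ∈ S, ∑ b ∈ S, w a b * (f a - f b) = 0 := by
    have hswap : ∑ a ∈ S, ∑ b ∈ S, w a b * (f a - f b)
        = - ∑ a ∈ S, ∑ b ∈ S, w a b * (f a - f b) := by
      conv_lhs => rw [Finset.sum_comm]
      rw [← Finset.sum_neg_distrib]
      apply Finset.sum_congr rfl; intro b _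
      rw [← Finset.sum_neg_distrib]
      apply Finset.sum_congr rfl; intro a _
      rw [hsym b a]; ring
    linarith
  have hrhs : ∑ a ∈ S, (Pi.single p 1 - Pi.single q 1 : V → ℝ) a = 1 := by
    simp only [Pi.sub_apply, Finset.sum_sub_distrib, Pi.single_apply]
    rw [Finset.sum_ite_eq' S p (fun _ => (1:ℝ)), Finset.sum_ite_eq' S q (fun _ => (1:ℝ))]
    simp [hp, hq]
  calc ∑ a ∈ S, ∑ b ∈ Sᶜ, w a b * (f a - f b)
      = ∑ a ∈ S, ∑ b, w a b * (f a - f b) - ∑ a ∈ S, ∑ b ∈ S, w a b * (f a - f b) := by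
        rw [Finset.sum_congr rfl fun a _ => hsplit a, Finset.sum_add_distrib]; ring
    _ = 1 := by rw [key, hdiag, hrhs]; ring

lemma ring_bound (w : V → V → ℝ) (hw0 : ∀ a b, 0 ≤ w a b) (h : V → ℝ)
    (ε B x : ℝ) (hε : 0 < ε) (hB : 0 < B) (hxpos : 0 < x)
    (hdegpos : ∀ a, 0 < deg w a)
    (Jk : Finset ℝ) (g : ℝ → ℝ) (S : ℝ → Finset V)
    (hgnn : ∀ j ∈ Jk, 0 ≤ g j)
    (hvol2x : ∀ j ∈ Jk, vol w (S j) < 2*x)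
    (hnest : ∀ i ∈ Jk, ∀ j ∈ Jk, S i ⊆ S j ∨ S j ⊆ S i)
    (hcur : ∀ j ∈ Jk, ∑ a ∈ S j, ∑ b ∈ (S j)ᶜ, w a b * (h a - h b) = 1)
    (hsigD : ∀ a b : V, 0 < (∑ j ∈ Jk, if a ∈ S j ∧ b ∉ S j then g j else 0) →
        (∑ j ∈ Jk, if a ∈ S j ∧ b ∉ S j then g j else 0) ≤ h a - h b)
    (hcut : ∀ j ∈ Jk, B * x ^ (ε + 1/2) ≤ cutW w (S j)) :
    ∑ j ∈ Jk, g j ≤ 2 / (B^2 * x^(2*ε)) := by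
  classical
  rcases Jk.eq_empty_or_nonempty with rfl | hne
  · simp; positivity
  obtain ⟨jj, hjj, hjjmax⟩ := Finset.exists_max_image Jk (fun j => vol w (S j)) hne
  have hsub : ∀ j ∈ Jk, S j ⊆ S jj := by
    intro j hj
    rcases hnest j hj jj hjj with hss | hss
    · exact hss
    · have h1 : vol w (S j) ≤ vol w (S jj) := hjjmax j hj
      have h2 : ∑ a ∈ S j \ S jj, deg w a + ∑ a ∈ S jj, deg w a = ∑ a ∈ S j, deg w a :=
        Finset.sum_sdiff hss
      have h3 : S j \ S jj = ∅ := by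
        by_contra hne2
        have h4 : 0 < ∑ a ∈ S j \ S jj, deg w a :=
          Finset.sum_pos (fun a _ => hdegpos a)
            (Finset.nonempty_of_ne_empty hne2)
        have h5 : vol w (S j) = ∑ a ∈ S j, deg w a := rfl
        have h6 : vol w (S jj) = ∑ a ∈ S jj, deg w a := rfl
        linarith
      intro a ha
      by_contra hnot
      have : a ∈ S j \ S jj := Finset.mem_sdiff.mpr ⟨ha, hnot⟩
      rw [h3] at this
      exact absurd this (Finset.notMem_empty a)
  set σ : V → V → ℝ := fun a b => ∑ j ∈ Jk, if a ∈ S j ∧ b ∉ S j then g j else 0 with hσdef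
  have hσnn : ∀ a b, 0 ≤ σ a b := by
    intro a b
    apply Finset.sum_nonneg
    intro j hj
    by_cases hc : a ∈ S j ∧ b ∉ S j
    · simp only [hc, if_true]; exact hgnn j hj
    · simp [hc]
  have hσS : ∀ a b, 0 < σ a b → a ∈ S jj := by
    intro a b hpos
    have hex : ∃ j ∈ Jk, (if a ∈ S j ∧ b ∉ S j then g j else 0) ≠ 0 := by
      by_contra hc
      push_neg at hc
      have : σ a b = 0 := Finset.sum_eq_zero hc
      linarith
    obtain ⟨j, hj, hne3⟩ := hex
    by_cases hcond : a ∈ S j ∧ b ∉ S j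
    · exact hsub j hj hcond.1
    · simp [hcond] at hne3
  set Dk := ∑ j ∈ Jk, g j with hDk
  have hDknn : 0 ≤ Dk := Finset.sum_nonneg hgnn
  -- pair sum identities
  have pairsum : ∀ (φ : V → V → ℝ), ∑ p : V × V, (∑ j ∈ Jk,
      if p.1 ∈ S j ∧ p.2 ∉ S j then g j * φ p.1 p.2 else 0)
      = ∑ j ∈ Jk, g j * (∑ a ∈ S j, ∑ b ∈ (S j)ᶜ, φ a b) := by
    intro φ
    have inner : ∀ j : ℝ, ∑ p : V × V, (if p.1 ∈ S j ∧ p.2 ∉ S j then g j * φ p.1 p.2 else 0)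
        = g j * (∑ a ∈ S j, ∑ b ∈ (S j)ᶜ, φ a b) := by
      intro j
      have e1 : ∀ p : V × V, (if p.1 ∈ S j ∧ p.2 ∉ S j then g j * φ p.1 p.2 else 0)
          = (if p ∈ (S j) ×ˢ (S j)ᶜ then g j * φ p.1 p.2 else 0) := by
        intro p
        congr 1
        rw [Finset.mem_product, Finset.mem_compl]
      rw [Finset.sum_congr rfl (fun p _ => e1 p)]
      rw [Finset.sum_ite_mem, Finset.univ_inter, Finset.sum_product]
      rw [Finset.mul_sum]
      apply Finset.sum_congr rfl
      intro a _
      rw [Finset.mul_sum]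
    rw [Finset.sum_comm]
    exact Finset.sum_congr rfl fun j _ => inner j
  have hwσ : ∀ p : V × V, w p.1 p.2 * σ p.1 p.2 = ∑ j ∈ Jk,
      (if p.1 ∈ S j ∧ p.2 ∉ S j then g j * w p.1 p.2 else 0) := by
    intro p
    rw [hσdef, Finset.mul_sum]
    apply Finset.sum_congr rfl
    intro j _
    by_cases hc : p.1 ∈ S j ∧ p.2 ∉ S j <;> simp [hc, mul_comm]
  have hA1 : ∑ p : V × V, w p.1 p.2 * σ p.1 p.2 = ∑ j ∈ Jk, g j * cutW w (S j) := by
    rw [Finset.sum_congr rfl (fun p _ => hwσ p), pairsum (fun a b => w a b)]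
    rfl
  have hAF : ∑ p : V × V, w p.1 p.2 * σ p.1 p.2 * (h p.1 - h p.2) = Dk := by
    have e1 : ∀ p : V × V, w p.1 p.2 * σ p.1 p.2 * (h p.1 - h p.2)
        = ∑ j ∈ Jk, (if p.1 ∈ S j ∧ p.2 ∉ S j then g j * (w p.1 p.2 * (h p.1 - h p.2)) else 0) := by
      intro p
      rw [hσdef, Finset.mul_sum, Finset.sum_mul]
      apply Finset.sum_congr rfl
      intro j _
      by_cases hc : p.1 ∈ S j ∧ p.2 ∉ S j <;> simp [hc] <;> ring
    rw [Finset.sum_congr rfl (fun p _ => e1 p), pairsum (fun a b => w a b * (h a - h b))]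
    rw [hDk]
    apply Finset.sum_congr rfl
    intro j hj
    rw [hcur j hj, mul_one]
  -- Cauchy–Schwarz setup
  set F : V × V → ℝ := fun p => Real.sqrt (w p.1 p.2 * σ p.1 p.2 * (h p.1 - h p.2)) with hF
  set G : V × V → ℝ := fun p => Real.sqrt (w p.1 p.2 * σ p.1 p.2 / (h p.1 - h p.2)) with hG
  have hcases : ∀ p : V × V, σ p.1 p.2 = 0 ∨ (0 < σ p.1 p.2 ∧ 0 < h p.1 - h p.2
      ∧ σ p.1 p.2 ≤ h p.1 - h p.2) := by
    intro p
    rcases eq_or_lt_of_le (hσnn p.1 p.2) with he | hl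
    · exact Or.inl he.symm
    · have hD := hsigD p.1 p.2 hl
      exact Or.inr ⟨hl, lt_of_lt_of_le hl hD, hD⟩
  have hFG : ∀ p : V × V, F p * G p = w p.1 p.2 * σ p.1 p.2 := by
    intro p
    rcases hcases p with h0 | ⟨hσp, hΔp, hσΔ⟩
    · simp [hF, hG, h0]
    · rw [hF, hG]
      rw [← Real.sqrt_mul (mul_nonneg (mul_nonneg (hw0 p.1 p.2) hσp.le) hΔp.le)]
      have he : w p.1 p.2 * σ p.1 p.2 * (h p.1 - h p.2) * (w p.1 p.2 * σ p.1 p.2 / (h p.1 - h p.2))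
          = (w p.1 p.2 * σ p.1 p.2)^2 := by
        field_simp
      rw [he, Real.sqrt_sq (mul_nonneg (hw0 p.1 p.2) hσp.le)]
  have hF2 : ∀ p : V × V, F p ^ 2 = w p.1 p.2 * σ p.1 p.2 * (h p.1 - h p.2) := by
    intro p
    rcases hcases p with h0 | ⟨hσp, hΔp, _⟩
    · simp [hF, h0]
    · exact Real.sq_sqrt (mul_nonneg (mul_nonneg (hw0 p.1 p.2) hσp.le) hΔp.le)
  have hG2 : ∀ p : V × V, G p ^ 2 ≤ (if p.1 ∈ S jj then w p.1 p.2 else 0) := by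
    intro p
    rcases hcases p with h0 | ⟨hσp, hΔp, hσΔ⟩
    · simp only [hG, h0, mul_zero, zero_div, Real.sqrt_zero]
      norm_num
      split <;> [exact hw0 p.1 p.2; exact le_refl 0]
    · rw [hG, Real.sq_sqrt (div_nonneg (mul_nonneg (hw0 p.1 p.2) hσp.le) hΔp.le),
        if_pos (hσS p.1 p.2 hσp)]
      rw [mul_div_assoc]
      calc w p.1 p.2 * (σ p.1 p.2 / (h p.1 - h p.2)) ≤ w p.1 p.2 * 1 := by
            apply mul_le_mul_of_nonneg_left _ (hw0 p.1 p.2)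
            rw [div_le_one hΔp]
            exact hσΔ
        _ = w p.1 p.2 := mul_one _
  have hCS := Finset.sum_mul_sq_le_sq_mul_sq Finset.univ F G
  have hsumF2 : ∑ p : V × V, F p ^ 2 = Dk := by
    rw [Finset.sum_congr rfl (fun p _ => hF2 p)]
    exact hAF
  have hsumG2 : ∑ p : V × V, G p ^ 2 ≤ 2 * x := by
    calc ∑ p : V × V, G p ^ 2 ≤ ∑ p : V × V, (if p.1 ∈ S jj then w p.1 p.2 else 0) :=
          Finset.sum_le_sum (fun p _ => hG2 p)
      _ = vol w (S jj) := by
          rw [Fintype.sum_prod_type]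
          have : ∀ a : V, ∑ b : V, (if a ∈ S jj then w a b else 0)
              = (if a ∈ S jj then deg w a else 0) := by
            intro a
            by_cases hc : a ∈ S jj <;> simp [hc, deg]
          rw [Finset.sum_congr rfl (fun a _ => this a)]
          rw [Finset.sum_ite_mem, Finset.univ_inter]
          rfl
      _ ≤ 2 * x := (hvol2x jj hjj).le
  have hsumFG : ∑ p : V × V, F p * G p = ∑ j ∈ Jk, g j * cutW w (S j) := by
    rw [Finset.sum_congr rfl (fun p _ => hFG p)]
    exact hA1
  have hA2 : B * x ^ (ε + 1/2) * Dk ≤ ∑ j ∈ Jk, g j * cutW w (S j) := by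
    rw [hDk, Finset.mul_sum]
    apply Finset.sum_le_sum
    intro j hj
    rw [mul_comm (B * x ^ (ε + 1/2)) (g j)]
    exact mul_le_mul_of_nonneg_left (hcut j hj) (hgnn j hj)
  -- combine
  have hkey : (B * x ^ (ε + 1/2) * Dk)^2 ≤ Dk * (2 * x) := by
    have h1 : (B * x ^ (ε + 1/2) * Dk)^2 ≤ (∑ j ∈ Jk, g j * cutW w (S j))^2 := by
      apply pow_le_pow_left₀ _ hA2
      have := Real.rpow_pos_of_pos hxpos (ε + 1/2)
      positivity
    calc (B * x ^ (ε + 1/2) * Dk)^2 ≤ (∑ j ∈ Jk, g j * cutW w (S j))^2 := h1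
      _ = (∑ p : V × V, F p * G p)^2 := by rw [hsumFG]
      _ ≤ (∑ p : V × V, F p ^ 2) * (∑ p : V × V, G p ^ 2) := hCS
      _ ≤ Dk * (2 * x) := by
          rw [hsumF2]
          apply mul_le_mul_of_nonneg_left hsumG2 hDknn
  -- final algebra
  have hx2e : (0:ℝ) < x ^ (2*ε) := Real.rpow_pos_of_pos hxpos _
  have hBx : (0:ℝ) < B^2 * x^(2*ε) := mul_pos (pow_pos hB 2) hx2e
  rcases eq_or_lt_of_le hDknn with h0 | hDkpos
  · calc ∑ j ∈ Jk, g j = Dk := hDk.symm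
      _ = 0 := h0.symm
      _ ≤ 2 / (B^2 * x^(2*ε)) := le_of_lt (div_pos (by norm_num) hBx)
  · have hre : (x ^ (ε + 1/2))^2 = x ^ (2*ε) * x := by
      rw [← Real.rpow_natCast (x ^ (ε + 1/2)) 2, ← Real.rpow_mul hxpos.le]
      rw [show (ε + 1/2) * ((2:ℕ):ℝ) = 2*ε + 1 by push_cast; ring]
      rw [Real.rpow_add hxpos, Real.rpow_one]
    have hkey' : B^2 * (x^(2*ε)*x) * Dk^2 ≤ Dk * (2*x) := by
      have he2 : (B * x^(ε+1/2) * Dk)^2 = B^2 * (x^(ε+1/2))^2 * Dk^2 := by ring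
      rw [he2, hre] at hkey
      exact hkey
    have hfin : Dk ≤ 2 / (B^2 * x^(2*ε)) := by
      rw [le_div_iff₀ hBx]
      nlinarith [mul_pos hxpos hDkpos, hkey']
    calc ∑ j ∈ Jk, g j = Dk := hDk.symm
      _ ≤ 2 / (B^2 * x^(2*ε)) := hfin

lemma core (w : V → V → ℝ) (hw0 : ∀ a b, 0 ≤ w a b)
    (h : V → ℝ) (α ε B : ℝ) (hα : 0 < α) (hε : 0 < ε) (hε2 : ε ≤ 1/2) (hB : 0 < B)
    (hdeg : ∀ a, 1/α ≤ deg w a)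
    (J : Finset ℝ) (g : ℝ → ℝ) (S : ℝ → Finset V)
    (hg : ∀ j ∈ J, 0 ≤ g j)
    (hnest : ∀ i ∈ J, ∀ j ∈ J, S i ⊆ S j ∨ S j ⊆ S i)
    (hvol : ∀ j ∈ J, 1/α ≤ vol w (S j))
    (hcur : ∀ j ∈ J, ∑ a ∈ S j, ∑ b ∈ (S j)ᶜ, w a b * (h a - h b) = 1)
    (hsig : ∀ a b : V, (J.filter (fun j => a ∈ S j ∧ b ∉ S j)).Nonempty →
        ∑ j ∈ J.filter (fun j => a ∈ S j ∧ b ∉ S j), g j ≤ h a - h b)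
    (hcut : ∀ j ∈ J, B * vol w (S j) ^ (ε + 1/2) ≤ cutW w (S j)) :
    ∑ j ∈ J, g j ≤ 2 * α ^ (2*ε) / (B^2 * ε) := by
  classical
  have hdegpos : ∀ a, 0 < deg w a := fun a => lt_of_lt_of_le (by positivity) (hdeg a)
  -- dyadic scale of a set
  set m : ℝ → ℕ := fun j => Nat.log 2 ⌊α * vol w (S j)⌋₊ with hm
  have hmspec : ∀ j ∈ J, ((2:ℝ)^(m j) ≤ α * vol w (S j) ∧ α * vol w (S j) < 2^(m j + 1)) := by
    intro j hj
    have h1 : (1:ℝ) ≤ α * vol w (S j) := by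
      have h2 := hvol j hj
      calc (1:ℝ) = α * (1/α) := by field_simp
      _ ≤ α * vol w (S j) := by
        apply mul_le_mul_of_nonneg_left h2 (le_of_lt hα)
    have hflpos : 1 ≤ ⌊α * vol w (S j)⌋₊ := Nat.le_floor (by exact_mod_cast h1)
    constructor
    · calc ((2:ℝ)^(m j)) = ((2^(m j) : ℕ) : ℝ) := by push_cast; ring
      _ ≤ (⌊α * vol w (S j)⌋₊ : ℝ) := by
          exact_mod_cast Nat.pow_log_le_self 2 (by omega)
      _ ≤ α * vol w (S j) := Nat.floor_le (by linarith)
    · have h2 : ⌊α * vol w (S j)⌋₊ < 2^(m j + 1) := Nat.lt_pow_succ_log_self (by norm_num) _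
      calc α * vol w (S j) < (⌊α * vol w (S j)⌋₊ : ℝ) + 1 := Nat.lt_floor_add_one _
      _ ≤ ((2^(m j + 1) : ℕ) : ℝ) := by exact_mod_cast Nat.succ_le_of_lt h2
      _ = 2^(m j + 1) := by push_cast; ring
  set K := Nat.log 2 ⌊α * vol w (univ : Finset V)⌋₊ with hK
  have hmK : ∀ j ∈ J, m j ∈ Finset.range (K+1) := by
    intro j hj
    rw [Finset.mem_range]
    have hmono : ⌊α * vol w (S j)⌋₊ ≤ ⌊α * vol w (univ : Finset V)⌋₊ := by
      apply Nat.floor_mono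
      apply mul_le_mul_of_nonneg_left _ hα.le
      apply Finset.sum_le_sum_of_subset_of_nonneg (Finset.subset_univ _)
      intro a _ _; exact (hdegpos a).le
    have h3 := Nat.log_mono_right (b := 2) hmono
    have h4 : m j = Nat.log 2 ⌊α * vol w (S j)⌋₊ := rfl
    omega
  rw [← Finset.sum_fiberwise_of_maps_to hmK g]
  -- the per-ring bound
  have hring : ∀ k : ℕ, ∑ j ∈ J.filter (fun j => m j = k), g j
      ≤ 2 * α ^ (2*ε) / B^2 * (((2:ℝ)^(2*ε))⁻¹)^k := by
    intro k
    set Jk := J.filter (fun j => m j = k) with hJk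
    have hJkJ : Jk ⊆ J := Finset.filter_subset _ _
    set x : ℝ := (2:ℝ)^k / α with hx
    have hxpos : 0 < x := by positivity
    have hmem : ∀ j ∈ Jk, j ∈ J ∧ m j = k := by
      intro j hj; rw [hJk, Finset.mem_filter] at hj; exact hj
    have hvolx : ∀ j ∈ Jk, x ≤ vol w (S j) := by
      intro j hj
      obtain ⟨hjJ, hjk⟩ := hmem j hj
      have h1 := (hmspec j hjJ).1
      rw [hjk] at h1
      rw [hx, div_le_iff₀ hα]
      linarith [mul_comm α (vol w (S j)) ▸ h1]
    have hvol2x : ∀ j ∈ Jk, vol w (S j) < 2 * x := by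
      intro j hj
      obtain ⟨hjJ, hjk⟩ := hmem j hj
      have h1 := (hmspec j hjJ).2
      rw [hjk] at h1
      have h2 : vol w (S j) < 2^(k+1)/α := by
        rw [lt_div_iff₀ hα]
        calc vol w (S j) * α = α * vol w (S j) := mul_comm _ _
          _ < 2^(k+1) := h1
      calc vol w (S j) < 2^(k+1)/α := h2
        _ = 2 * x := by rw [hx]; field_simp; ring
    have hbound := ring_bound w hw0 h ε B x hε hB hxpos hdegpos Jk g S
      (fun j hj => hg j (hJkJ hj))
      hvol2x
      (fun i hi j hj => hnest i (hJkJ hi) j (hJkJ hj))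
      (fun j hj => hcur j (hJkJ hj))
      ?_ ?_
    · -- convert 2 / (B^2 * x^(2ε)) to the stated form
      refine le_trans hbound (le_of_eq ?_)
      have hpow : ((2:ℝ)^k)^(2*ε) = ((2:ℝ)^(2*ε))^k := by
        rw [← Real.rpow_natCast (2:ℝ) k, ← Real.rpow_natCast ((2:ℝ)^(2*ε)) k,
          ← Real.rpow_mul (by norm_num : (0:ℝ) ≤ 2),
          ← Real.rpow_mul (by norm_num : (0:ℝ) ≤ 2)]
        ring_nf
      have hx2e : x^(2*ε) = ((2:ℝ)^(2*ε))^k / α^(2*ε) := by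
        rw [hx, Real.div_rpow (by positivity) hα.le, hpow]
      rw [hx2e, inv_pow]
      have hp1 : (0:ℝ) < ((2:ℝ)^(2*ε))^k := by positivity
      have hp2 : (0:ℝ) < α^(2*ε) := Real.rpow_pos_of_pos hα _
      field_simp
    · -- hsigD from hsig
      intro a b hpos
      have hval : (∑ j ∈ Jk, if a ∈ S j ∧ b ∉ S j then g j else 0)
          = ∑ j ∈ Jk.filter (fun j => a ∈ S j ∧ b ∉ S j), g j :=
        (Finset.sum_filter (fun j => a ∈ S j ∧ b ∉ S j) g).symm
      have hsubset : Jk.filter (fun j => a ∈ S j ∧ b ∉ S j)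
          ⊆ J.filter (fun j => a ∈ S j ∧ b ∉ S j) := by
        intro t ht
        rw [Finset.mem_filter] at ht ⊢
        exact ⟨hJkJ ht.1, ht.2⟩
      have hle : (∑ j ∈ Jk, if a ∈ S j ∧ b ∉ S j then g j else 0)
          ≤ ∑ j ∈ J.filter (fun j => a ∈ S j ∧ b ∉ S j), g j := by
        rw [hval]
        apply Finset.sum_le_sum_of_subset_of_nonneg hsubset
        intro t ht _
        exact hg t (Finset.mem_filter.mp ht).1
      have hnonempty : (J.filter (fun j => a ∈ S j ∧ b ∉ S j)).Nonempty := by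
        rw [hval] at hpos
        obtain ⟨t, ht⟩ := Finset.nonempty_of_sum_ne_zero (ne_of_gt hpos)
        exact ⟨t, hsubset ht⟩
      exact le_trans hle (hsig a b hnonempty)
    · -- hcut at scale x
      intro j hj
      refine le_trans ?_ (hcut j (hJkJ hj))
      apply mul_le_mul_of_nonneg_left _ hB.le
      apply Real.rpow_le_rpow hxpos.le (hvolx j hj)
      linarith
  -- geometric sum
  have hs0 : (0:ℝ) ≤ ((2:ℝ)^(2*ε))⁻¹ := by positivity
  have h2gt1 : (1:ℝ) < (2:ℝ)^(2*ε) := by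
    apply Real.one_lt_rpow_iff_of_pos (by norm_num) |>.mpr
    exact Or.inl ⟨by norm_num, by positivity⟩
  have hs1 : ((2:ℝ)^(2*ε))⁻¹ < 1 := by
    rw [inv_lt_one₀ (by positivity)]
    exact h2gt1
  have hsle : ((2:ℝ)^(2*ε))⁻¹ ≤ 1 - ε := by
    have he1 : ((2:ℝ)^(2*ε))⁻¹ = Real.exp ((1 - 2*ε) * 0 + (2*ε) * (-Real.log 2)) := by
      rw [← Real.rpow_neg (by norm_num : (0:ℝ) ≤ 2)]
      rw [Real.rpow_def_of_pos (by norm_num : (0:ℝ) < 2)]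
      congr 1; ring
    rw [he1]
    have hcx := convexOn_exp.2 (Set.mem_univ (0:ℝ)) (Set.mem_univ (-Real.log 2))
      (by linarith : (0:ℝ) ≤ 1 - 2*ε) (by linarith : (0:ℝ) ≤ 2*ε) (by ring)
    simp only [smul_eq_mul] at hcx
    calc Real.exp ((1 - 2*ε) * 0 + (2*ε) * (-Real.log 2))
        ≤ (1 - 2*ε) * Real.exp 0 + (2*ε) * Real.exp (-Real.log 2) := hcx
      _ = 1 - ε := by
          rw [Real.exp_zero, Real.exp_neg, Real.exp_log (by norm_num : (0:ℝ) < 2)]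
          ring
  have hgeo : ∑ k ∈ Finset.range (K+1), (((2:ℝ)^(2*ε))⁻¹)^k ≤ 1/ε := by
    set s := ((2:ℝ)^(2*ε))⁻¹
    have h1 : ∑ k ∈ Finset.range (K+1), s^k = (1 - s^(K+1))/(1 - s) := by
      rw [geom_sum_eq (ne_of_lt hs1)]
      rw [div_eq_div_iff (by linarith) (by linarith)]
      ring
    rw [h1]
    have hs1' : (0:ℝ) < 1 - s := by linarith
    have h2 : (1 - s^(K+1))/(1 - s) ≤ 1/(1-s) := by
      apply (div_le_div_iff_of_pos_right hs1').mpr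
      have := pow_nonneg hs0 (K+1)
      linarith
    have h3 : 1/(1-s) ≤ 1/ε := by
      apply one_div_le_one_div_of_le hε
      linarith
    linarith
  calc ∑ k ∈ Finset.range (K+1), ∑ j ∈ J.filter (fun j => m j = k), g j
      ≤ ∑ k ∈ Finset.range (K+1), 2 * α ^ (2*ε) / B^2 * (((2:ℝ)^(2*ε))⁻¹)^k :=
        Finset.sum_le_sum (fun k _ => hring k)
    _ = 2 * α ^ (2*ε) / B^2 * ∑ k ∈ Finset.range (K+1), (((2:ℝ)^(2*ε))⁻¹)^k := by
        rw [Finset.mul_sum]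
    _ ≤ 2 * α ^ (2*ε) / B^2 * (1/ε) := by
        apply mul_le_mul_of_nonneg_left hgeo (by positivity)
    _ = 2 * α ^ (2*ε) / (B^2 * ε) := by
        field_simp

end SCAux

open SCAux in
theorem sparse_cut_from_reff_diam :
    ∃ C : ℝ, 0 < C ∧
      ∀ (V : Type) [Fintype V] [DecidableEq V]
        (w : V → V → ℝ) (Ld : Matrix V V ℝ) (α ε R : ℝ),
        GoodW w → Conn w → IsMoorePenrose (lap w) Ld →
        0 < α → (∀ v : V, 1 / α ≤ deg w v) →
        0 < ε → ε < 1 / 2 →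
        (∀ u v : V, reff Ld u v ≤ R) → (∃ u v : V, reff Ld u v = R) →
        ∃ U : Finset V, U.Nonempty ∧ vol w U ≤ vol w Finset.univ / 2 ∧
          cutW w U / vol w U ≤
            C * α ^ ε / Real.sqrt (R * ε) * vol w U ^ (ε - 1 / 2) := by
  refine ⟨3, by norm_num, ?_⟩
  intro V _ _ w Ld α ε R hw hconn hmp hα hdeg hε hε2 hRub hRex
  classical
  obtain ⟨hw0, hsym, hww⟩ := hw
  have hdegpos : ∀ a : V, 0 < deg w a := fun a => lt_of_lt_of_le (by positivity) (hdeg a)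
  -- rule out the one-point case
  by_cases htriv : ∀ a b : V, a = b
  · obtain ⟨v0, -, -⟩ := hRex
    exfalso
    have huniv : (univ : Finset V) = {v0} :=
      Finset.eq_singleton_iff_unique_mem.mpr ⟨mem_univ _, fun x _ => htriv x v0⟩
    have hd : deg w v0 = 0 := by
      rw [deg, huniv, Finset.sum_singleton, hww]
    have := hdegpos v0
    rw [hd] at this
    exact lt_irrefl _ this
  push_neg at htriv
  obtain ⟨a0, b0, hab0⟩ := htriv
  have hRpos : 0 < R :=
    lt_of_lt_of_le (reff_pos w hw0 hsym hww hconn hab0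
      (lap_harmonic w hw0 hsym hww hconn hmp a0 b0)) (hRub a0 b0)
  obtain ⟨u, v, hReq⟩ := hRex
  have huv : u ≠ v := by
    rintro rfl
    rw [reff, sub_self] at hReq
    simp at hReq
    rw [← hReq] at hRpos
    exact lt_irrefl _ hRpos
  set d : V → ℝ := Pi.single u 1 - Pi.single v 1 with hd
  set f : V → ℝ := Ld *ᵥ d with hf
  have hLf : lap w *ᵥ f = d := lap_harmonic w hw0 hsym hww hconn hmp u v
  have hval : R = f u - f v := by rw [← hReq, reff_eq_sub]
  have hfvu : f v < f u := by
    have : 0 < f u - f v := hval ▸ hRpos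
    linarith
  by_contra hcon
  push_neg at hcon
  set τ := 3 * α ^ ε / Real.sqrt (R * ε) with hτ
  have hRε : 0 < R * ε := mul_pos hRpos hε
  have hτpos : 0 < τ := by
    rw [hτ]
    have h1 : 0 < α ^ ε := Real.rpow_pos_of_pos hα ε
    have h2 : 0 < Real.sqrt (R * ε) := Real.sqrt_pos.mpr hRε
    positivity
  -- threshold structure
  set T' : Finset ℝ := (Finset.image f univ).filter (fun s => f v ≤ s ∧ s ≤ f u) with hT'
  have hfvT : f v ∈ T' := by
    rw [hT', Finset.mem_filter]
    exact ⟨Finset.mem_image_of_mem f (mem_univ v), le_refl _, hfvu.le⟩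
  have hfuT : f u ∈ T' := by
    rw [hT', Finset.mem_filter]
    exact ⟨Finset.mem_image_of_mem f (mem_univ u), hfvu.le, le_refl _⟩
  have hTle : ∀ t ∈ T', t ≤ f u := by
    intro t ht
    rw [hT', Finset.mem_filter] at ht
    exact ht.2.2
  have hTge : ∀ t ∈ T', f v ≤ t := by
    intro t ht
    rw [hT', Finset.mem_filter] at ht
    exact ht.2.1
  set J : Finset ℝ := T'.filter (fun t => f v < t) with hJdef
  set g : ℝ → ℝ := fun t => t - flo T' t with hg
  have hJT : ∀ t ∈ J, t ∈ T' ∧ f v < t ∧ t ≤ f u := by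
    intro t ht
    rw [hJdef, Finset.mem_filter] at ht
    exact ⟨ht.1, ht.2, hTle t ht.1⟩
  have hgnn : ∀ t ∈ J, 0 ≤ g t := by
    intro t ht
    obtain ⟨htT, htv, -⟩ := hJT t ht
    have := (flo_spec hfvT htv).2.1
    rw [hg]; dsimp only; linarith
  -- sweep sets
  set S1 : ℝ → Finset V := fun t => univ.filter (fun a => t ≤ f a) with hS1
  set S2 : ℝ → Finset V := fun t => univ.filter (fun a => f a < t) with hS2
  have hS2c : ∀ t, S2 t = (S1 t)ᶜ := by
    intro t
    rw [hS1, hS2]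
    ext a
    simp only [hS1, hS2, Finset.mem_compl, Finset.mem_filter, mem_univ, true_and]
    exact lt_iff_not_ge
  have hvol12 : ∀ t, vol w (S1 t) + vol w (S2 t) = vol w univ := by
    intro t
    rw [hS2c t]
    exact Finset.sum_add_sum_compl (S1 t) (deg w)
  have huS1 : ∀ t ∈ J, u ∈ S1 t := by
    intro t ht
    rw [hS1, Finset.mem_filter]
    exact ⟨mem_univ _, (hJT t ht).2.2⟩
  have hvS1 : ∀ t ∈ J, v ∉ S1 t := by
    intro t ht
    rw [hS1, Finset.mem_filter]
    push_neg
    intro _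
    exact (hJT t ht).2.1
  have hvS2 : ∀ t ∈ J, v ∈ S2 t := by
    intro t ht
    rw [hS2, Finset.mem_filter]
    exact ⟨mem_univ _, (hJT t ht).2.1⟩
  have huS2 : ∀ t ∈ J, u ∉ S2 t := by
    intro t ht
    rw [hS2, Finset.mem_filter]
    push_neg
    intro _
    exact (hJT t ht).2.2
  -- split J into the u-side and v-side
  set uS : Finset ℝ := J.filter (fun t => vol w (S1 t) ≤ vol w univ / 2) with huSdef
  set vS : Finset ℝ := J.filter (fun t => ¬ (vol w (S1 t) ≤ vol w univ / 2)) with hvSdef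
  have huSJ : uS ⊆ J := Finset.filter_subset _ _
  have hvSJ : vS ⊆ J := Finset.filter_subset _ _
  have hsplitJ : ∑ t ∈ uS, g t + ∑ t ∈ vS, g t = ∑ t ∈ J, g t :=
    Finset.sum_filter_add_sum_filter_not J _ g
  -- telescoping
  have htel : f u - f v ≤ ∑ t ∈ J, g t := by
    have := telescope T'.card T' (f v) (f u) le_rfl hfvT hfuT hTle hfvu.le
    exact this
  -- failure of the conclusion gives strong cuts
  have hcut1 : ∀ t ∈ J, vol w (S1 t) ≤ vol w univ / 2 →
      τ * vol w (S1 t) ^ (ε + 1/2) ≤ cutW w (S1 t) := by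
    intro t ht hhalf
    have hvolpos : 0 < vol w (S1 t) :=
      Finset.sum_pos (fun a _ => hdegpos a) ⟨u, huS1 t ht⟩
    have hlt := hcon (S1 t) ⟨u, huS1 t ht⟩ hhalf
    have h1 : τ * vol w (S1 t) ^ (ε - 1/2) * vol w (S1 t) < cutW w (S1 t) := by
      have := mul_lt_mul_of_pos_right hlt hvolpos
      rwa [div_mul_cancel₀ _ (ne_of_gt hvolpos)] at this
    have h2 : vol w (S1 t) ^ (ε - 1/2) * vol w (S1 t) = vol w (S1 t) ^ (ε + 1/2) := by
      calc vol w (S1 t) ^ (ε - 1/2) * vol w (S1 t)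
          = vol w (S1 t) ^ (ε - 1/2) * vol w (S1 t) ^ (1:ℝ) := by rw [Real.rpow_one]
        _ = vol w (S1 t) ^ (ε - 1/2 + 1) := (Real.rpow_add hvolpos _ _).symm
        _ = vol w (S1 t) ^ (ε + 1/2) := by congr 1; ring
    calc τ * vol w (S1 t) ^ (ε + 1/2) = τ * vol w (S1 t) ^ (ε - 1/2) * vol w (S1 t) := by
          rw [mul_assoc, h2]
      _ ≤ cutW w (S1 t) := h1.le
  have hcut2 : ∀ t ∈ J, vol w (S2 t) ≤ vol w univ / 2 →
      τ * vol w (S2 t) ^ (ε + 1/2) ≤ cutW w (S2 t) := by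
    intro t ht hhalf
    have hvolpos : 0 < vol w (S2 t) :=
      Finset.sum_pos (fun a _ => hdegpos a) ⟨v, hvS2 t ht⟩
    have hlt := hcon (S2 t) ⟨v, hvS2 t ht⟩ hhalf
    have h1 : τ * vol w (S2 t) ^ (ε - 1/2) * vol w (S2 t) < cutW w (S2 t) := by
      have := mul_lt_mul_of_pos_right hlt hvolpos
      rwa [div_mul_cancel₀ _ (ne_of_gt hvolpos)] at this
    have h2 : vol w (S2 t) ^ (ε - 1/2) * vol w (S2 t) = vol w (S2 t) ^ (ε + 1/2) := by
      calc vol w (S2 t) ^ (ε - 1/2) * vol w (S2 t)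
          = vol w (S2 t) ^ (ε - 1/2) * vol w (S2 t) ^ (1:ℝ) := by rw [Real.rpow_one]
        _ = vol w (S2 t) ^ (ε - 1/2 + 1) := (Real.rpow_add hvolpos _ _).symm
        _ = vol w (S2 t) ^ (ε + 1/2) := by congr 1; ring
    calc τ * vol w (S2 t) ^ (ε + 1/2) = τ * vol w (S2 t) ^ (ε - 1/2) * vol w (S2 t) := by
          rw [mul_assoc, h2]
      _ ≤ cutW w (S2 t) := h1.le
  -- shared σ-bound helper
  have hsighelp : ∀ (W : Finset ℝ), W ⊆ J → ∀ (p q : ℝ) (cond : ℝ → Prop)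
      [DecidablePred cond], p ∈ Finset.image f univ →
      (∀ t ∈ W.filter cond, p < t ∧ t ≤ q) →
      (W.filter cond).Nonempty →
      ∑ t ∈ W.filter cond, g t ≤ q - p := by
    intro W hWJ p q cond _ hpim hrange hne
    obtain ⟨t0, ht0⟩ := hne
    have hpq : p ≤ q := by
      have := hrange t0 ht0
      linarith
    apply gaps_le (W.filter cond).card (W.filter cond) (flo T') p q le_rfl
    · intro t ht
      have htJ : t ∈ J := hWJ (Finset.mem_filter.mp ht).1
      obtain ⟨htT, htv, htu⟩ := hJT t htJ
      obtain ⟨hpt, htq⟩ := hrange t ht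
      have hspec := flo_spec hfvT htv
      refine ⟨hspec.2.1, ?_, htq⟩
      -- p ≤ flo T' t
      have hfvflo : f v ≤ flo T' t := hspec.2.2 (f v) hfvT htv
      by_cases hple : f v ≤ p
      · have hpT : p ∈ T' := by
          rw [hT', Finset.mem_filter]
          exact ⟨hpim, hple, le_trans hpt.le htu⟩
        exact hspec.2.2 p hpT hpt
      · push_neg at hple
        linarith
    · intro s hs t ht hst
      have htJ : t ∈ J := hWJ (Finset.mem_filter.mp ht).1
      have hsJ : s ∈ J := hWJ (Finset.mem_filter.mp hs).1
      exact (flo_spec hfvT (hJT t htJ).2.1).2.2 s (hJT s hsJ).1 hst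
    · exact hpq
  -- monotonicity of sweep sets
  have hmono1 : ∀ i j : ℝ, i ≤ j → S1 j ⊆ S1 i := by
    intro i j hij a ha
    rw [hS1, Finset.mem_filter] at ha ⊢
    exact ⟨ha.1, le_trans hij ha.2⟩
  have hmono2 : ∀ i j : ℝ, i ≤ j → S2 i ⊆ S2 j := by
    intro i j hij a ha
    rw [hS2, Finset.mem_filter] at ha ⊢
    exact ⟨ha.1, lt_of_lt_of_le ha.2 hij⟩
  -- first application of core (u-side)
  have happ1 : ∑ t ∈ uS, g t ≤ 2 * α^(2*ε) / (τ^2 * ε) := by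
    apply core w hw0 f α ε τ hα hε hε2.le hτpos hdeg uS g S1
    · exact fun t ht => hgnn t (huSJ ht)
    · intro i hi j hj
      rcases le_total i j with hij | hij
      · exact Or.inr (hmono1 i j hij)
      · exact Or.inl (hmono1 j i hij)
    · intro t ht
      calc 1/α ≤ deg w u := hdeg u
        _ ≤ vol w (S1 t) :=
          Finset.single_le_sum (fun a _ => (hdegpos a).le) (huS1 t (huSJ ht))
    · exact fun t ht => unit_current w hsym hww hLf (huS1 t (huSJ ht)) (hvS1 t (huSJ ht))
    · intro a b hne
      have hrange : ∀ t ∈ uS.filter (fun j => a ∈ S1 j ∧ b ∉ S1 j), f b < t ∧ t ≤ f a := by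
        intro t ht
        obtain ⟨htW, haS, hbS⟩ := Finset.mem_filter.mp ht
        rw [hS1, Finset.mem_filter] at haS
        rw [hS1, Finset.mem_filter] at hbS
        push_neg at hbS
        exact ⟨hbS (mem_univ b), haS.2⟩
      exact hsighelp uS huSJ (f b) (f a) _ (Finset.mem_image_of_mem f (mem_univ b)) hrange hne
    · intro t ht
      have hhalf : vol w (S1 t) ≤ vol w univ / 2 := (Finset.mem_filter.mp ht).2
      exact hcut1 t (huSJ ht) hhalf
  -- second application of core (v-side), with potential -f
  have hLf2 : lap w *ᵥ (fun a => -f a) = Pi.single v 1 - Pi.single u 1 := by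
    have h1 : (fun a => -f a) = -f := rfl
    rw [h1, Matrix.mulVec_neg, hLf, hd, neg_sub]
  have happ2 : ∑ t ∈ vS, g t ≤ 2 * α^(2*ε) / (τ^2 * ε) := by
    apply core w hw0 (fun a => -f a) α ε τ hα hε hε2.le hτpos hdeg vS g S2
    · exact fun t ht => hgnn t (hvSJ ht)
    · intro i hi j hj
      rcases le_total i j with hij | hij
      · exact Or.inl (hmono2 i j hij)
      · exact Or.inr (hmono2 j i hij)
    · intro t ht
      calc 1/α ≤ deg w v := hdeg v
        _ ≤ vol w (S2 t) :=
          Finset.single_le_sum (fun a _ => (hdegpos a).le) (hvS2 t (hvSJ ht))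
    · exact fun t ht => unit_current w hsym hww hLf2 (hvS2 t (hvSJ ht)) (huS2 t (hvSJ ht))
    · intro a b hne
      have hrange : ∀ t ∈ vS.filter (fun j => a ∈ S2 j ∧ b ∉ S2 j), f a < t ∧ t ≤ f b := by
        intro t ht
        obtain ⟨htW, haS, hbS⟩ := Finset.mem_filter.mp ht
        rw [hS2, Finset.mem_filter] at haS
        rw [hS2, Finset.mem_filter] at hbS
        push_neg at hbS
        exact ⟨haS.2, hbS (mem_univ b)⟩
      have h1 := hsighelp vS hvSJ (f a) (f b) _ (Finset.mem_image_of_mem f (mem_univ a)) hrange hne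
      have h2 : f b - f a = (fun a => -f a) a - (fun a => -f a) b := by simp; ring
      rw [← h2]
      exact h1
    · intro t ht
      have hnothalf : ¬ (vol w (S1 t) ≤ vol w univ / 2) := (Finset.mem_filter.mp ht).2
      push_neg at hnothalf
      have hhalf : vol w (S2 t) ≤ vol w univ / 2 := by
        have := hvol12 t
        linarith
      exact hcut2 t (hvSJ ht) hhalf
  -- numeric contradiction
  have hae : (α^ε)^2 = α^(2*ε) := by
    rw [← Real.rpow_natCast (α^ε) 2, ← Real.rpow_mul hα.le]
    congr 1
    push_cast
    ring
  have hτ2 : τ^2 = 9 * α^(2*ε)/(R*ε) := by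
    rw [hτ, div_pow, mul_pow, Real.sq_sqrt hRε.le, hae]
    norm_num
  have hA2 : 0 < α^(2*ε) := Real.rpow_pos_of_pos hα _
  have hfin : 4 * α^(2*ε)/(τ^2*ε) = 4*R/9 := by
    rw [hτ2]
    field_simp
  have hsum : R ≤ 4*R/9 := by
    calc R = f u - f v := hval
      _ ≤ ∑ t ∈ J, g t := htel
      _ = ∑ t ∈ uS, g t + ∑ t ∈ vS, g t := hsplitJ.symm
      _ ≤ 2 * α^(2*ε) / (τ^2 * ε) + 2 * α^(2*ε) / (τ^2 * ε) := add_le_add happ1 happ2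
      _ = 4 * α^(2*ε)/(τ^2*ε) := by ring
      _ = 4*R/9 := hfin
  linarith
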